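/- Let n ≥ 1 and let A be an n×n real matrix. Suppose (i) A is irreducible, (ii) A is diagonally dominant, (iii) there exists an index i such that |A i i| > ∑_{j ≠ i} |A i j|, and (iv) every diagonal entry of A is positive. Then every complex eigenvalue μ of A (i.e. of the matrix obtained by mapping the entries of A into ℂ) satisfies Re μ > 0. -/

import Mathlib

/-- **Taussky's theorem, second part.** An irreducible, diagonally dominant real
matrix with at least one strictly dominant row and positive diagonal entries has
all its complex eigenvalues in the open right half plane. -/
theorem taussky_eigenvalues_pos_re {n : ℕ} (hn : 1 ≤ n) (A : Matrix (Fin n) (Fin n) ℝ)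
    (h_irr : ∀ S : Set (Fin n), S.Nonempty → S ≠ Set.univ →
      ∃ i ∈ S, ∃ j ∉ S, A i j ≠ 0)
    (h_dd : ∀ i : Fin n, ∑ j ∈ Finset.univ.erase i, |A i j| ≤ |A i i|)
    (h_strict : ∃ i : Fin n, ∑ j ∈ Finset.univ.erase i, |A i j| < |A i i|)
    (h_pos : ∀ i : Fin n, 0 < A i i) :
    ∀ μ : ℂ, μ ∈ spectrum ℂ (A.map (algebraMap ℝ ℂ)) → 0 < μ.re := by
  intro μ hμ
  by_contra hre
  push_neg at hre
  set M := A.map (algebraMap ℝ ℂ) with hM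
  rw [spectrum.mem_iff, Matrix.isUnit_iff_isUnit_det] at hμ
  have hdet : ((algebraMap ℂ (Matrix (Fin n) (Fin n) ℂ)) μ - M).det = 0 := by
    by_contra h; exact hμ (isUnit_iff_ne_zero.mpr h)
  obtain ⟨v, hv0, hveq⟩ := (Matrix.exists_mulVec_eq_zero_iff).mpr hdet
  have heig : ∀ i, (μ - (A i i : ℂ)) * v i
      = ∑ j ∈ Finset.univ.erase i, (A i j : ℂ) * v j := by
    intro i
    have h0 := congrFun hveq i
    have h1 : ((algebraMap ℂ (Matrix (Fin n) (Fin n) ℂ)) μ - M).mulVec v i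
        = μ * v i - ∑ j, (A i j : ℂ) * v j := by
      simp [Matrix.sub_mulVec, Matrix.mulVec, dotProduct, Matrix.algebraMap_matrix_apply,
        hM, Matrix.map_apply, sub_mul, Finset.sum_sub_distrib, ite_mul, zero_mul,
        Finset.sum_ite_eq, Finset.sum_ite_eq']
    have h2 : μ * v i = ∑ j, (A i j : ℂ) * v j :=
      sub_eq_zero.mp (by simpa using h1.symm.trans h0)
    have h3 : (∑ j, (A i j : ℂ) * v j)
        = (A i i : ℂ) * v i + ∑ j ∈ Finset.univ.erase i, (A i j : ℂ) * v j := by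
      rw [← Finset.add_sum_erase _ _ (Finset.mem_univ i)]
    rw [sub_mul, h2, h3]
    ring
  -- the max modulus
  obtain ⟨i₀, -, hi₀⟩ := Finset.exists_max_image (Finset.univ : Finset (Fin n))
    (fun i => ‖v i‖) ⟨⟨0, hn⟩, Finset.mem_univ _⟩
  set m := ‖v i₀‖ with hm
  have hmax : ∀ j, ‖v j‖ ≤ m := fun j => hi₀ j (Finset.mem_univ j)
  have hm0 : 0 < m := by
    have : ∃ k, v k ≠ 0 := by
      by_contra h; push_neg at h; exact hv0 (funext h)
    obtain ⟨k, hk⟩ := this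
    exact lt_of_lt_of_le (by simpa using hk) (hmax k)
  -- key: for Re μ ≤ 0 and a > 0, a ≤ |μ - a|
  have habs : ∀ i : Fin n, A i i ≤ ‖μ - (A i i : ℂ)‖ := by
    intro i
    have h1 : |(μ - (A i i : ℂ)).re| ≤ ‖μ - (A i i : ℂ)‖ :=
      Complex.abs_re_le_norm _
    have h2 : (μ - (A i i : ℂ)).re = μ.re - A i i := by simp
    have h3 : A i i ≤ |(μ - (A i i : ℂ)).re| := by
      rw [h2, abs_sub_comm]
      calc A i i ≤ A i i - μ.re := by linarith
        _ ≤ |A i i - μ.re| := le_abs_self _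
    linarith
  -- row estimate
  have hrow : ∀ i : Fin n, ‖μ - (A i i : ℂ)‖ * ‖v i‖
      ≤ ∑ j ∈ Finset.univ.erase i, |A i j| * ‖v j‖ := by
    intro i
    rw [← norm_mul, heig i]
    calc ‖∑ j ∈ Finset.univ.erase i, (A i j : ℂ) * v j‖
        ≤ ∑ j ∈ Finset.univ.erase i, ‖(A i j : ℂ) * v j‖ := by
          exact norm_sum_le _ _
      _ = ∑ j ∈ Finset.univ.erase i, |A i j| * ‖v j‖ := by
          simp [norm_mul, Complex.norm_real]
  -- all coordinates have modulus m
  have hS : ∀ j, ‖v j‖ = m := by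
    set S : Set (Fin n) := {j | ‖v j‖ = m} with hSdef
    by_contra hne
    push_neg at hne
    obtain ⟨k, hk⟩ := hne
    have hSne : S ≠ Set.univ := by
      intro h
      exact hk (by have : k ∈ S := h ▸ Set.mem_univ k; exact this)
    obtain ⟨i, hiS, j₀, hj₀S, hAij⟩ := h_irr S ⟨i₀, rfl⟩ hSne
    have hji : j₀ ≠ i := fun h => hj₀S (h ▸ hiS)
    have hvj₀ : ‖v j₀‖ < m := lt_of_le_of_ne (hmax j₀) hj₀S
    have hstrict : ∑ j ∈ Finset.univ.erase i, |A i j| * ‖v j‖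
        < ∑ j ∈ Finset.univ.erase i, |A i j| * m := by
      apply Finset.sum_lt_sum
      · intro j _
        exact mul_le_mul_of_nonneg_left (hmax j) (abs_nonneg _)
      · exact ⟨j₀, Finset.mem_erase.mpr ⟨hji, Finset.mem_univ _⟩,
          mul_lt_mul_of_pos_left hvj₀ (abs_pos.mpr hAij)⟩
    have hchain : ‖μ - (A i i : ℂ)‖ * m < ‖μ - (A i i : ℂ)‖ * m := by
      calc ‖μ - (A i i : ℂ)‖ * m
          = ‖μ - (A i i : ℂ)‖ * ‖v i‖ := by rw [hiS]
        _ ≤ ∑ j ∈ Finset.univ.erase i, |A i j| * ‖v j‖ := hrow i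
        _ < ∑ j ∈ Finset.univ.erase i, |A i j| * m := hstrict
        _ = (∑ j ∈ Finset.univ.erase i, |A i j|) * m := by rw [Finset.sum_mul]
        _ ≤ |A i i| * m := mul_le_mul_of_nonneg_right (h_dd i) hm0.le
        _ = A i i * m := by rw [abs_of_pos (h_pos i)]
        _ ≤ ‖μ - (A i i : ℂ)‖ * m :=
            mul_le_mul_of_nonneg_right (habs i) hm0.le
    exact lt_irrefl _ hchain
  obtain ⟨i, hi⟩ := h_strict
  have hchain2 : ‖μ - (A i i : ℂ)‖ * m < ‖μ - (A i i : ℂ)‖ * m := by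
    calc ‖μ - (A i i : ℂ)‖ * m
        = ‖μ - (A i i : ℂ)‖ * ‖v i‖ := by rw [hS i]
      _ ≤ ∑ j ∈ Finset.univ.erase i, |A i j| * ‖v j‖ := hrow i
      _ = (∑ j ∈ Finset.univ.erase i, |A i j|) * m := by
          rw [Finset.sum_mul]; exact Finset.sum_congr rfl fun j _ => by rw [hS j]
      _ < |A i i| * m := mul_lt_mul_of_pos_right hi hm0
      _ = A i i * m := by rw [abs_of_pos (h_pos i)]
      _ ≤ ‖μ - (A i i : ℂ)‖ * m :=
          mul_le_mul_of_nonneg_right (habs i) hm0.le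
  exact lt_irrefl _ hchain2
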